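/- Let U be a metric space and for each j ∈ {1,2} let M_j be a Markov kernel on U satisfying: for all bounded measurable Lipschitz φ, |M_j(φ)(u) - M_j(φ)(u')| ≤ C‖φ‖·|u - u'|. Let G: U → R satisfy c^{-1} < G < c and be globally Lipschitz. Let u_1^i, u_2^i (i = 1,...,N) be points of U, let η_j^N = (1/N)Σ_i δ_{u_j^i}, and define Φ_j(η_j^N)(φ) = η_j^N(G M_j(φ))/η_j^N(G). Then there exists C(φ) depending only on c, the Lipschitz constants, and ‖φ‖, such that |Φ_1(η_1^N)(φ) - Φ_2(η_2^N)(φ)| ≤ C(φ) ( (1/N)Σ_{i=1}^N min(|u_1^i - u_2^i|, 1) + |||M_1 - M_2||| ), where |||M_1 - M_2||| = sup over bounded-by-1 Lipschitz ψ and x of |M_1(ψ)(x) - M_2(ψ)(x)|. -/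

import Mathlib

open MeasureTheory Finset

lemma stmt9_arith (A₁ A₂ S₁ S₂ N c K₁ K₂ b D Sd : ℝ)
    (hc : 0 < c) (hN : 0 < N) (hb : 0 < b) (hD : 0 ≤ D) (hSd : 0 ≤ Sd)
    (hK₁ : 0 ≤ K₁) (hK₂ : 0 ≤ K₂)
    (hS₁ : N * c⁻¹ ≤ S₁) (hS₂ : N * c⁻¹ ≤ S₂)
    (hA₂ : |A₂| ≤ N * (c * b))
    (hAd : |A₁ - A₂| ≤ K₁ * Sd + N * (c * b * D))
    (hSdiff : |S₁ - S₂| ≤ K₂ * Sd) :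
    |A₁ / S₁ - A₂ / S₂| ≤ (c * K₁ + c ^ 3 * b * K₂ + c ^ 2 * b + 1) * (N⁻¹ * Sd + D) := by
  have hS₁0 : 0 < S₁ := lt_of_lt_of_le (by positivity) hS₁
  have hS₂0 : 0 < S₂ := lt_of_lt_of_le (by positivity) hS₂
  have key : A₁ / S₁ - A₂ / S₂ = (A₁ - A₂) / S₁ + A₂ * (S₂ - S₁) / (S₁ * S₂) := by
    field_simp; ring
  rw [key]
  have h1 : |(A₁ - A₂) / S₁ + A₂ * (S₂ - S₁) / (S₁ * S₂)|
      ≤ |A₁ - A₂| / S₁ + |A₂| * |S₂ - S₁| / (S₁ * S₂) := by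
    refine (abs_add_le _ _).trans ?_
    rw [abs_div, abs_div, abs_mul, abs_of_pos hS₁0, abs_of_pos (by positivity : (0:ℝ) < S₁ * S₂)]
  refine h1.trans ?_
  have h2 : |A₁ - A₂| / S₁ ≤ (K₁ * Sd + N * (c * b * D)) / (N * c⁻¹) := by
    apply div_le_div₀ (by positivity) hAd (by positivity) hS₁
  have h3 : |A₂| * |S₂ - S₁| / (S₁ * S₂) ≤ (N * (c * b)) * (K₂ * Sd) / ((N * c⁻¹) * (N * c⁻¹)) := by
    apply div_le_div₀ (by positivity)
    · exact mul_le_mul hA₂ ((abs_sub_comm _ _).le.trans hSdiff) (abs_nonneg _) (by positivity)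
    · positivity
    · exact mul_le_mul hS₁ hS₂ (by positivity) hS₁0.le
  refine (add_le_add h2 h3).trans ?_
  have e1 : (K₁ * Sd + N * (c * b * D)) / (N * c⁻¹) = c * K₁ * (N⁻¹ * Sd) + c ^ 2 * b * D := by
    field_simp
  have e2 : (N * (c * b)) * (K₂ * Sd) / ((N * c⁻¹) * (N * c⁻¹))
      = c ^ 3 * b * K₂ * (N⁻¹ * Sd) := by
    field_simp
  rw [e1, e2]
  have hX : 0 ≤ N⁻¹ * Sd := by positivity
  nlinarith [mul_nonneg (mul_nonneg hc.le hK₁) hD,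
    mul_nonneg (by positivity : (0:ℝ) ≤ c ^ 3 * b * K₂) hD,
    mul_nonneg (by positivity : (0:ℝ) ≤ c ^ 2 * b) hX, hX, hD]

/-- Deterministic stability estimate for the one-step Bayes update difference between the
two levels of a coupled particle system: with a bounded (`c⁻¹ < G < c`) Lipschitz potential
`G`, Markov kernels `M₁, M₂` satisfying a Lipschitz mixing property, `D` an upper bound for
`|||M₁ - M₂|||` (sup over bounded-by-1 Lipschitz test functions and initial points), and
`φ` bounded measurable Lipschitz, there is `C(φ)` such that for all `N` and particle clouds
`u₁, u₂`,
`|Φ₁(η₁^N)(φ) - Φ₂(η₂^N)(φ)| ≤ C(φ)((1/N)Σᵢ min(dist(u₁ⁱ,u₂ⁱ),1) + D)`. -/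
theorem stmt9 (U : Type*) [MetricSpace U] [MeasurableSpace U]
    (M₁ M₂ : U → Measure U)
    (hM : ∀ u, IsProbabilityMeasure (M₁ u) ∧ IsProbabilityMeasure (M₂ u))
    (c C₀ CG : ℝ) (hc : 1 < c) (hC₀ : 0 ≤ C₀) (hCG : 0 ≤ CG)
    (G : U → ℝ) (hG : ∀ x, c⁻¹ < G x ∧ G x < c)
    (hGlip : ∀ x x', |G x - G x'| ≤ CG * dist x x')
    (hMlip : ∀ (M : U → Measure U), (M = M₁ ∨ M = M₂) →
      ∀ (ψ : U → ℝ) (b : ℝ), Measurable ψ → (∀ x, |ψ x| ≤ b) →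
        (∃ K, LipschitzWith K ψ) →
        ∀ u u', |(∫ x, ψ x ∂(M u)) - ∫ x, ψ x ∂(M u')| ≤ C₀ * b * dist u u')
    (D : ℝ)
    (hD : ∀ (ψ : U → ℝ), Measurable ψ → (∀ x, |ψ x| ≤ 1) → (∃ K, LipschitzWith K ψ) →
      ∀ x, |(∫ y, ψ y ∂(M₁ x)) - ∫ y, ψ y ∂(M₂ x)| ≤ D)
    (φ : U → ℝ) (hφm : Measurable φ) (bφ : ℝ) (hbφ : ∀ x, |φ x| ≤ bφ)
    (hφlip : ∃ K, LipschitzWith K φ) :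
    ∃ Cφ > 0, ∀ (N : ℕ), 0 < N → ∀ (u₁ u₂ : Fin N → U),
      |(∑ i, G (u₁ i) * ∫ x, φ x ∂(M₁ (u₁ i))) / (∑ i, G (u₁ i))
          - (∑ i, G (u₂ i) * ∫ x, φ x ∂(M₂ (u₂ i))) / (∑ i, G (u₂ i))|
        ≤ Cφ * ((N : ℝ)⁻¹ * ∑ i, min (dist (u₁ i) (u₂ i)) 1 + D) := by
  obtain ⟨Kφ, hKφ⟩ := hφlip
  set b : ℝ := max bφ 1 with hbdef
  have hb1 : (1:ℝ) ≤ b := le_max_right _ _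
  have hb0 : (0:ℝ) < b := lt_of_lt_of_le one_pos hb1
  have hbφb : bφ ≤ b := le_max_left _ _
  have hc0 : (0:ℝ) < c := lt_trans one_pos hc
  have hφb : ∀ x, |φ x| ≤ b := fun x => (hbφ x).trans hbφb
  refine ⟨c * (CG * b + c * C₀ * b + 2 * c * b) + c ^ 3 * b * (CG + 2 * c) + c ^ 2 * b + 1,
    by positivity, ?_⟩
  intro N hN u₁ u₂
  have hNpos : (0:ℝ) < (N:ℝ) := by exact_mod_cast hN
  have hD0 : 0 ≤ D := by
    have h := hD (fun _ => 0) measurable_const (fun x => by norm_num)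
      ⟨0, LipschitzWith.const 0⟩ (u₁ ⟨0, hN⟩)
    simpa using h
  -- integral bounds
  have hint : ∀ (M : U → Measure U), (M = M₁ ∨ M = M₂) → ∀ x, |∫ y, φ y ∂(M x)| ≤ b := by
    intro M hMm x
    have : IsProbabilityMeasure (M x) := by
      rcases hMm with rfl | rfl
      · exact (hM x).1
      · exact (hM x).2
    calc |∫ y, φ y ∂(M x)| ≤ b * ((M x) Set.univ).toReal := by
          rw [← Real.norm_eq_abs]
          exact norm_integral_le_of_norm_le_const
            (Filter.Eventually.of_forall fun y => by rw [Real.norm_eq_abs]; exact hφb y)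
      _ = b := by simp
  -- kernel-difference bound
  have hDφ : ∀ x, |(∫ y, φ y ∂(M₁ x)) - ∫ y, φ y ∂(M₂ x)| ≤ b * D := by
    intro x
    have hlip : ∃ K, LipschitzWith K (fun y => b⁻¹ * φ y) := by
      refine ⟨⟨b⁻¹, by positivity⟩ * Kφ, LipschitzWith.of_dist_le_mul fun y z => ?_⟩
      have h := hKφ.dist_le_mul y z
      rw [Real.dist_eq, ← mul_sub, abs_mul, abs_inv, abs_of_pos hb0]
      calc b⁻¹ * |φ y - φ z| ≤ b⁻¹ * (Kφ * dist y z) := by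
            apply mul_le_mul_of_nonneg_left _ (by positivity)
            rw [← Real.dist_eq]; exact h
        _ = ((⟨b⁻¹, by positivity⟩ * Kφ : NNReal) : ℝ) * dist y z := by
            change b⁻¹ * (Kφ * dist y z) = (b⁻¹ * (Kφ : ℝ)) * dist y z; ring
    have hψb : ∀ y, |b⁻¹ * φ y| ≤ 1 := by
      intro y
      rw [abs_mul, abs_inv, abs_of_pos hb0]
      calc b⁻¹ * |φ y| ≤ b⁻¹ * b := mul_le_mul_of_nonneg_left (hφb y) (by positivity)
        _ = 1 := inv_mul_cancel₀ hb0.ne'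
    have key := hD (fun y => b⁻¹ * φ y) (hφm.const_mul b⁻¹) hψb hlip x
    rw [integral_const_mul, integral_const_mul] at key
    have e : |(∫ y, φ y ∂(M₁ x)) - ∫ y, φ y ∂(M₂ x)|
        = b * |b⁻¹ * (∫ y, φ y ∂(M₁ x)) - b⁻¹ * ∫ y, φ y ∂(M₂ x)| := by
      rw [← mul_sub, abs_mul, abs_inv, abs_of_pos hb0, ← mul_assoc,
        mul_inv_cancel₀ hb0.ne', one_mul]
    rw [e]
    exact mul_le_mul_of_nonneg_left key hb0.le
  -- Lipschitz mixing bound with b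
  have hmix : ∀ (M : U → Measure U), (M = M₁ ∨ M = M₂) → ∀ u u',
      |(∫ x, φ x ∂(M u)) - ∫ x, φ x ∂(M u')| ≤ C₀ * b * dist u u' := by
    intro M hMm u u'
    refine (hMlip M hMm φ bφ hφm hbφ ⟨Kφ, hKφ⟩ u u').trans ?_
    have hd := dist_nonneg (x := u) (y := u')
    nlinarith [mul_nonneg (mul_nonneg hC₀ (sub_nonneg.mpr hbφb)) hd]
  -- G facts
  have hGpos : ∀ x, 0 < G x := fun x => lt_trans (by positivity) (hG x).1
  have hGabs : ∀ x, |G x| ≤ c := fun x => by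
    rw [abs_of_pos (hGpos x)]; exact (hG x).2.le
  apply stmt9_arith _ _ _ _ _ _ _ _ _ _ _ hc0 hNpos hb0 hD0
  · exact Finset.sum_nonneg fun i _ => le_min dist_nonneg zero_le_one
  · positivity
  · positivity
  · calc (N:ℝ) * c⁻¹ = ∑ _i : Fin N, c⁻¹ := by simp
      _ ≤ _ := Finset.sum_le_sum fun i _ => (hG (u₁ i)).1.le
  · calc (N:ℝ) * c⁻¹ = ∑ _i : Fin N, c⁻¹ := by simp
      _ ≤ _ := Finset.sum_le_sum fun i _ => (hG (u₂ i)).1.le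
  · calc |∑ i, G (u₂ i) * ∫ x, φ x ∂(M₂ (u₂ i))|
        ≤ ∑ i, |G (u₂ i) * ∫ x, φ x ∂(M₂ (u₂ i))| := Finset.abs_sum_le_sum_abs _ _
      _ ≤ ∑ _i : Fin N, c * b := Finset.sum_le_sum fun i _ => by
          rw [abs_mul]
          exact mul_le_mul (hGabs _) (hint M₂ (Or.inr rfl) _) (abs_nonneg _) hc0.le
      _ = (N:ℝ) * (c * b) := by simp
  · -- numerator difference
    rw [← Finset.sum_sub_distrib]
    refine (Finset.abs_sum_le_sum_abs _ _).trans ?_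
    have hterm : ∀ i ∈ Finset.univ,
        |G (u₁ i) * (∫ x, φ x ∂(M₁ (u₁ i))) - G (u₂ i) * ∫ x, φ x ∂(M₂ (u₂ i))|
          ≤ (CG * b + c * C₀ * b + 2 * c * b) * min (dist (u₁ i) (u₂ i)) 1 + c * (b * D) := by
      intro i _
      have hI₁ : |∫ x, φ x ∂(M₁ (u₁ i))| ≤ b := hint M₁ (Or.inl rfl) _
      have hI₂ : |∫ x, φ x ∂(M₂ (u₂ i))| ≤ b := hint M₂ (Or.inr rfl) _
      have hd := dist_nonneg (x := u₁ i) (y := u₂ i)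
      have e : G (u₁ i) * (∫ x, φ x ∂(M₁ (u₁ i))) - G (u₂ i) * ∫ x, φ x ∂(M₂ (u₂ i))
          = (G (u₁ i) - G (u₂ i)) * (∫ x, φ x ∂(M₁ (u₁ i)))
            + G (u₂ i) * ((∫ x, φ x ∂(M₁ (u₁ i))) - ∫ x, φ x ∂(M₁ (u₂ i)))
            + G (u₂ i) * ((∫ x, φ x ∂(M₁ (u₂ i))) - ∫ x, φ x ∂(M₂ (u₂ i))) := by ring
      have hb3 : |G (u₂ i) * ((∫ x, φ x ∂(M₁ (u₂ i))) - ∫ x, φ x ∂(M₂ (u₂ i)))|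
          ≤ c * (b * D) := by
        rw [abs_mul]
        exact mul_le_mul (hGabs _) (hDφ _) (abs_nonneg _) hc0.le
      rcases le_or_gt (dist (u₁ i) (u₂ i)) 1 with hle | hlt
      · have hmin : min (dist (u₁ i) (u₂ i)) 1 = dist (u₁ i) (u₂ i) := min_eq_left hle
        have hb1' : |(G (u₁ i) - G (u₂ i)) * (∫ x, φ x ∂(M₁ (u₁ i)))|
            ≤ (CG * dist (u₁ i) (u₂ i)) * b := by
          rw [abs_mul]
          exact mul_le_mul (hGlip _ _) hI₁ (abs_nonneg _) (by positivity)
        have hb2 : |G (u₂ i) * ((∫ x, φ x ∂(M₁ (u₁ i))) - ∫ x, φ x ∂(M₁ (u₂ i)))|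
            ≤ c * (C₀ * b * dist (u₁ i) (u₂ i)) := by
          rw [abs_mul]
          exact mul_le_mul (hGabs _) (hmix M₁ (Or.inl rfl) _ _) (abs_nonneg _) hc0.le
        rw [e, hmin]
        refine ((abs_add_le _ _).trans (add_le_add ((abs_add_le _ _).trans
          (add_le_add hb1' hb2)) hb3)).trans ?_
        nlinarith [mul_nonneg (mul_nonneg hc0.le hb0.le) hd]
      · have hmin : min (dist (u₁ i) (u₂ i)) 1 = 1 := min_eq_right hlt.le
        rw [hmin]
        have h1 : |G (u₁ i) * ∫ x, φ x ∂(M₁ (u₁ i))| ≤ c * b := by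
          rw [abs_mul]; exact mul_le_mul (hGabs _) hI₁ (abs_nonneg _) hc0.le
        have h2 : |G (u₂ i) * ∫ x, φ x ∂(M₂ (u₂ i))| ≤ c * b := by
          rw [abs_mul]; exact mul_le_mul (hGabs _) hI₂ (abs_nonneg _) hc0.le
        refine (abs_sub _ _).trans ?_
        nlinarith [mul_nonneg (mul_nonneg hc0.le hb0.le) hD0,
          mul_nonneg hCG hb0.le, mul_nonneg (mul_nonneg hc0.le hC₀) hb0.le]
    refine (Finset.sum_le_sum hterm).trans ?_
    rw [Finset.sum_add_distrib, ← Finset.mul_sum, Finset.sum_const, Finset.card_univ,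
      Fintype.card_fin, nsmul_eq_mul]
    apply le_of_eq; push_cast; ring
  · -- denominator difference
    rw [← Finset.sum_sub_distrib, Finset.mul_sum]
    refine (Finset.abs_sum_le_sum_abs _ _).trans (Finset.sum_le_sum fun i _ => ?_)
    rcases le_or_gt (dist (u₁ i) (u₂ i)) 1 with hle | hlt
    · rw [min_eq_left hle]
      refine (hGlip _ _).trans ?_
      have hd := dist_nonneg (x := u₁ i) (y := u₂ i)
      nlinarith
    · rw [min_eq_right hlt.le, mul_one]
      calc |G (u₁ i) - G (u₂ i)| ≤ |G (u₁ i)| + |G (u₂ i)| := abs_sub _ _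
        _ ≤ c + c := add_le_add (hGabs _) (hGabs _)
        _ ≤ CG + 2 * c := by linarith
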